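/- Let Λ_1, …, Λ_d ⊆ ℤ₊ⁿ be finite nonempty sets and S ⊆ {1,…,n}. Then the union, over all d-tuples (F_1,…,F_d) with F_ν a nonempty face of N(Λ_ν,S) for each ν, of ⋂_{ν=1}^{d} F_ν*|N(Λ_ν,S) equals Z(S); and the union, over all such d-tuples, of ⋂_{ν=1}^{d} (F_ν*)°|N(Λ_ν,S) equals Z(S) \ {0}. -/

import Mathlib

open scoped RealInnerProductSpace Pointwise

noncomputable section

/-- A subset `F ⊆ P` is a face of `P` if there are `q ∈ ℝⁿ` and `ρ ∈ ℝ` with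
`⟨q, u⟩ = ρ` for every `u ∈ F` and `ρ < ⟨q, y⟩` for every `y ∈ P \ F`. -/
def IsFace {n : ℕ} (P F : Set (EuclideanSpace ℝ (Fin n))) : Prop :=
  F ⊆ P ∧ ∃ (q : EuclideanSpace ℝ (Fin n)) (ρ : ℝ),
    (∀ u ∈ F, ⟪q, u⟫ = ρ) ∧ ∀ y ∈ P \ F, ρ < ⟪q, y⟫

/-- The cone `F*|P` of a face `F` of `P`. -/
def coneOf {n : ℕ} (P F : Set (EuclideanSpace ℝ (Fin n))) :
    Set (EuclideanSpace ℝ (Fin n)) :=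
  {q | ∃ ρ : ℝ, (∀ u ∈ F, ⟪q, u⟫ = ρ) ∧ ∀ y ∈ P \ F, ρ ≤ ⟪q, y⟫}

/-- The interior `(F*)°|P` of the cone of a face `F` of `P`. -/
def coneInterior {n : ℕ} (P F : Set (EuclideanSpace ℝ (Fin n))) :
    Set (EuclideanSpace ℝ (Fin n)) :=
  {q | q ≠ 0 ∧ ∃ ρ : ℝ, (∀ u ∈ F, ⟪q, u⟫ = ρ) ∧ ∀ y ∈ P \ F, ρ < ⟪q, y⟫}

/-- The embedding of `ℤ₊ⁿ` into `ℝⁿ`. -/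
def toR {n : ℕ} (m : Fin n → ℕ) : EuclideanSpace ℝ (Fin n) := WithLp.toLp 2 (fun j => (m j : ℝ))

/-- `ℝ₊^S = {u ∈ ℝⁿ : uⱼ ≥ 0 for j ∈ S and uⱼ = 0 for j ∉ S}`. -/
def RplusS {n : ℕ} (S : Set (Fin n)) : Set (EuclideanSpace ℝ (Fin n)) :=
  {u | ∀ j, (j ∈ S → 0 ≤ u j) ∧ (j ∉ S → u j = 0)}

/-- The Newton polyhedron `N(Ω, S) = Ch(Ω + ℝ₊^S)`. -/
def newton {n : ℕ} (Ω : Set (Fin n → ℕ)) (S : Set (Fin n)) :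
    Set (EuclideanSpace ℝ (Fin n)) :=
  convexHull ℝ ((toR '' Ω) + RplusS S)

/-- `Z(S) = {u ∈ ℝⁿ : uⱼ ≥ 0 for every j ∈ S}`. -/
def ZS {n : ℕ} (S : Set (Fin n)) : Set (EuclideanSpace ℝ (Fin n)) :=
  {u | ∀ j ∈ S, 0 ≤ u j}

lemma zero_mem_RplusS {n : ℕ} (S : Set (Fin n)) : (0 : EuclideanSpace ℝ (Fin n)) ∈ RplusS S :=
  fun _ => ⟨fun _ => le_refl 0, fun _ => rfl⟩

lemma RplusS_add {n : ℕ} {S : Set (Fin n)} {v w : EuclideanSpace ℝ (Fin n)}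
    (hv : v ∈ RplusS S) (hw : w ∈ RplusS S) : v + w ∈ RplusS S := by
  intro j
  refine ⟨fun hj => ?_, fun hj => ?_⟩
  · have := (hv j).1 hj; have := (hw j).1 hj
    show 0 ≤ v j + w j; linarith
  · show v j + w j = 0; rw [(hv j).2 hj, (hw j).2 hj, add_zero]

lemma inner_RplusS_nonneg {n : ℕ} {S : Set (Fin n)} {x v : EuclideanSpace ℝ (Fin n)}
    (hx : x ∈ ZS S) (hv : v ∈ RplusS S) : 0 ≤ ⟪x, v⟫ := by
  rw [PiLp.inner_apply]
  refine Finset.sum_nonneg fun j _ => ?_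
  by_cases hj : j ∈ S
  · have := (hv j).1 hj; have := hx j hj
    simp only [RCLike.inner_apply, conj_trivial]; positivity
  · simp [RCLike.inner_apply, (hv j).2 hj]

lemma toR_mem_newton {n : ℕ} {Λ : Set (Fin n → ℕ)} {S : Set (Fin n)} {m : Fin n → ℕ}
    (hm : m ∈ Λ) : toR m ∈ newton Λ S := by
  have : toR m + 0 ∈ (toR '' Λ) + RplusS S :=
    Set.add_mem_add ⟨m, hm, rfl⟩ (zero_mem_RplusS S)
  rw [add_zero] at this
  exact subset_convexHull ℝ _ this

lemma newton_lb {n : ℕ} {Λ : Set (Fin n → ℕ)} {S : Set (Fin n)}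
    {x : EuclideanSpace ℝ (Fin n)} {ρ : ℝ} (hx : x ∈ ZS S)
    (hρ : ∀ m ∈ Λ, ρ ≤ ⟪x, toR m⟫) : ∀ y ∈ newton Λ S, ρ ≤ ⟪x, y⟫ := by
  have hlin : IsLinearMap ℝ (fun w : EuclideanSpace ℝ (Fin n) => ⟪x, w⟫) :=
    ⟨fun a b => inner_add_right x a b, fun c a => real_inner_smul_right x a c⟩
  intro y hy
  refine convexHull_min ?_ (convex_halfSpace_ge hlin ρ) hy
  rintro z ⟨a, ⟨m, hm, rfl⟩, v, hv, rfl⟩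
  show ρ ≤ ⟪x, toR m + v⟫
  rw [inner_add_right]
  have h1 := hρ m hm
  have h2 := inner_RplusS_nonneg hx hv
  linarith

lemma newton_add_mem {n : ℕ} {Λ : Set (Fin n → ℕ)} {S : Set (Fin n)}
    {u v : EuclideanSpace ℝ (Fin n)} (hu : u ∈ newton Λ S) (hv : v ∈ RplusS S) :
    u + v ∈ newton Λ S := by
  have hsub : (toR '' Λ + RplusS S) + {v} ⊆ toR '' Λ + RplusS S := by
    rintro z ⟨a, ⟨b, hb, w, hw, rfl⟩, c, hc, rfl⟩
    rw [Set.mem_singleton_iff] at hc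
    rw [hc]
    exact ⟨b, hb, w + v, RplusS_add hw hv, (add_assoc _ _ _).symm⟩
  have : u + v ∈ convexHull ℝ ((toR '' Λ + RplusS S) + {v}) := by
    rw [convexHull_add, convexHull_singleton]
    exact Set.add_mem_add hu rfl
  exact convexHull_mono hsub this

lemma mem_ZS_of_cone {n : ℕ} {Λ : Set (Fin n → ℕ)} {S : Set (Fin n)}
    {F : Set (EuclideanSpace ℝ (Fin n))} {x : EuclideanSpace ℝ (Fin n)}
    (hFP : F ⊆ newton Λ S) (hFne : F.Nonempty) {ρ : ℝ}
    (heq : ∀ u ∈ F, ⟪x, u⟫ = ρ) (hge : ∀ y ∈ newton Λ S \ F, ρ ≤ ⟪x, y⟫) :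
    x ∈ ZS S := by
  intro j hj
  obtain ⟨u, hu⟩ := hFne
  have huP := hFP hu
  have hsingle : EuclideanSpace.single j (1 : ℝ) ∈ RplusS S := by
    intro k
    constructor
    · intro _
      rw [EuclideanSpace.single_apply]
      split <;> norm_num
    · intro hk
      rw [EuclideanSpace.single_apply]
      split
      · next h => exact absurd (h ▸ hj) hk
      · rfl
  have hmem : u + EuclideanSpace.single j (1 : ℝ) ∈ newton Λ S := newton_add_mem huP hsingle
  have key : ρ ≤ ⟪x, u + EuclideanSpace.single j (1 : ℝ)⟫ := by
    by_cases h : u + EuclideanSpace.single j (1 : ℝ) ∈ F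
    · exact (heq _ h).ge
    · exact hge _ ⟨hmem, h⟩
  rw [inner_add_right, heq u hu, EuclideanSpace.inner_single_right] at key
  simpa using key

/-- The union, over all `d`-tuples of nonempty faces `F_ν` of `N(Λ_ν,S)`, of the
intersections `⋂_ν F_ν*` (resp. `⋂_ν (F_ν*)°`) equals `Z(S)` (resp. `Z(S) \ {0}`). -/
theorem stmt11 {n d : ℕ} (hd : 0 < d) (Λ : Fin d → Set (Fin n → ℕ))
    (hfin : ∀ ν, (Λ ν).Finite) (hne : ∀ ν, (Λ ν).Nonempty) (S : Set (Fin n)) :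
    {x | ∃ F : Fin d → Set (EuclideanSpace ℝ (Fin n)),
        (∀ ν, IsFace (newton (Λ ν) S) (F ν) ∧ (F ν).Nonempty) ∧
        ∀ ν, x ∈ coneOf (newton (Λ ν) S) (F ν)} = ZS S ∧
    {x | ∃ F : Fin d → Set (EuclideanSpace ℝ (Fin n)),
        (∀ ν, IsFace (newton (Λ ν) S) (F ν) ∧ (F ν).Nonempty) ∧
        ∀ ν, x ∈ coneInterior (newton (Λ ν) S) (F ν)} = ZS S \ {0} := by
  -- for x ∈ ZS S, construct F from minimizers
  have construct : ∀ x ∈ ZS S, ∃ F : Fin d → Set (EuclideanSpace ℝ (Fin n)),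
      (∀ ν, IsFace (newton (Λ ν) S) (F ν) ∧ (F ν).Nonempty) ∧
      ∀ ν, ∃ ρ : ℝ, (∀ u ∈ F ν, ⟪x, u⟫ = ρ) ∧
        ∀ y ∈ newton (Λ ν) S \ F ν, ρ < ⟪x, y⟫ := by
    intro x hx
    choose m₀ hm₀ hmin using fun ν =>
      Set.exists_min_image (Λ ν) (fun m => ⟪x, toR m⟫) (hfin ν) (hne ν)
    refine ⟨fun ν => {y ∈ newton (Λ ν) S | ⟪x, y⟫ = ⟪x, toR (m₀ ν)⟫}, ?_, ?_⟩
    · intro ν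
      have lb : ∀ y ∈ newton (Λ ν) S, ⟪x, toR (m₀ ν)⟫ ≤ ⟪x, y⟫ :=
        newton_lb hx (hmin ν)
      refine ⟨⟨Set.sep_subset _ _, x, ⟪x, toR (m₀ ν)⟫, fun u hu => hu.2,
        fun y hy => lt_of_le_of_ne (lb y hy.1) fun h => hy.2 ⟨hy.1, h.symm⟩⟩,
        ⟨toR (m₀ ν), toR_mem_newton (hm₀ ν), rfl⟩⟩
    · intro ν
      have lb : ∀ y ∈ newton (Λ ν) S, ⟪x, toR (m₀ ν)⟫ ≤ ⟪x, y⟫ :=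
        newton_lb hx (hmin ν)
      exact ⟨⟪x, toR (m₀ ν)⟫, fun u hu => hu.2,
        fun y hy => lt_of_le_of_ne (lb y hy.1) fun h => hy.2 ⟨hy.1, h.symm⟩⟩
  constructor
  · ext x
    constructor
    · rintro ⟨F, hF, hcone⟩
      set ν : Fin d := ⟨0, hd⟩
      obtain ⟨ρ, heq, hge⟩ := hcone ν
      exact mem_ZS_of_cone (hF ν).1.1 (hF ν).2 heq hge
    · intro hx
      obtain ⟨F, hF, hρ⟩ := construct x hx
      exact ⟨F, hF, fun ν => by
        obtain ⟨ρ, h1, h2⟩ := hρ ν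
        exact ⟨ρ, h1, fun y hy => (h2 y hy).le⟩⟩
  · ext x
    constructor
    · rintro ⟨F, hF, hcone⟩
      set ν : Fin d := ⟨0, hd⟩
      obtain ⟨hx0, ρ, heq, hge⟩ := hcone ν
      refine ⟨mem_ZS_of_cone (hF ν).1.1 (hF ν).2 heq (fun y hy => (hge y hy).le), hx0⟩
    · rintro ⟨hx, hx0⟩
      obtain ⟨F, hF, hρ⟩ := construct x hx
      exact ⟨F, hF, fun ν => ⟨hx0, hρ ν⟩⟩
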